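/- Suppose the pair (A, C) is detectable, ρ(A) > 0, and ρ(A) < (λ_m + λ_2)/(λ_m − λ_2). Let W = I_m − αL with α a real number satisfying α > 0 and λ_2^{-1}(1 − ρ(A)^{-1}) < α < λ_m^{-1}(1 + ρ(A)^{-1}). Then for every complex λ with |λ| ≥ 1 and every partition of {1, …, m} into disjoint sets {i_1, …, i_l} and {i_{l+1}, …, i_m}, the block matrix whose first block row is (W ⊗ A − λ I_{mn}, B̄_{i_1}, …, B̄_{i_l}) and whose remaining block rows are (C̄_{i_j}, 0, …, 0) for j = l+1, …, m has rank at least nm over ℂ. -/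

import Mathlib

open Matrix Kronecker Polynomial

/-- The matrix E_{N_i} whose columns are the standard basis vectors e_j of ℝ^m for
j in the closed neighborhood N_i of vertex i (the neighbors of i together with i). -/
def Ebar {m : ℕ} (G : SimpleGraph (Fin m)) [DecidableRel G.Adj] (i : Fin m) :
    Matrix (Fin m) {j : Fin m // G.Adj i j ∨ j = i} ℝ :=
  fun k j => if k = j.1 then 1 else 0

/-- B̄ᵢ = E_{N_i} ⊗ Iₙ. -/
def Bbar {m : ℕ} (n : ℕ) (G : SimpleGraph (Fin m)) [DecidableRel G.Adj] (i : Fin m) :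
    Matrix (Fin m × Fin n) ({j : Fin m // G.Adj i j ∨ j = i} × Fin n) ℝ :=
  Ebar G i ⊗ₖ (1 : Matrix (Fin n) (Fin n) ℝ)

/-- Evaluation of the characteristic polynomial. -/
lemma eval_charpoly_aux {k : ℕ} (M : Matrix (Fin k) (Fin k) ℂ) (t : ℂ) :
    M.charpoly.eval t = (t • 1 - M).det := by
  rw [Matrix.charpoly, ← Polynomial.coe_evalRingHom, RingHom.map_det]
  congr 1
  ext i j
  by_cases h : i = j <;>
    simp [h, charmatrix_apply_eq, charmatrix_apply_ne, Matrix.one_apply, Matrix.sub_apply,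
      Matrix.smul_apply]

/-- Rank of a column submatrix is at most the rank. -/
lemma rank_col_submatrix_le {R1 C1 Ct : Type*} [Fintype R1] [Fintype C1] [Fintype Ct]
    [DecidableEq C1] [DecidableEq Ct]
    (M : Matrix R1 Ct ℂ) (g : C1 → Ct) : (M.submatrix id g).rank ≤ M.rank := by
  rw [Matrix.rank, Matrix.rank]
  apply Submodule.finrank_mono
  rintro y ⟨x, rfl⟩
  refine ⟨fun c => ∑ j ∈ Finset.univ.filter (fun j => g j = c), x j, ?_⟩
  ext i
  simp only [mulVecLin_apply, mulVec, dotProduct, submatrix_apply, id]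
  rw [← Finset.sum_fiberwise Finset.univ g (fun j => M i (g j) * x j)]
  refine Finset.sum_congr rfl fun c _ => ?_
  rw [Finset.mul_sum]
  refine Finset.sum_congr rfl fun j hj => ?_
  simp only [Finset.mem_filter] at hj
  rw [hj.2]

lemma key {m n : ℕ} (hm : 0 < m) (ρA : ℝ) (hρ_pos : 0 < ρA)
    (Wc : Matrix (Fin m) (Fin m) ℂ) (hWH : Wc.IsHermitian)
    (heigW : ∀ (μ : ℝ) (v : Fin m → ℂ), v ≠ 0 → Wc *ᵥ v = (μ : ℂ) • v → μ = 1 ∨ |μ| < ρA⁻¹)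
    (hker1 : ∀ v : Fin m → ℂ, Wc *ᵥ v = v → ∀ i j, v i = v j)
    (hrow : ∀ i, ∑ j, Wc i j = 1)
    (B : Matrix (Fin n) (Fin n) ℂ)
    (hB : ∀ (μ : ℂ) (v : Fin n → ℂ), v ≠ 0 → B *ᵥ v = μ • v → ‖μ‖ ≤ ρA)
    (lam : ℂ) (hlam : 1 ≤ ‖lam‖)
    (x : Fin m × Fin n → ℂ)
    (hx : ∀ p : Fin m × Fin n, ∑ q : Fin m × Fin n, (Wc p.1 q.1 * B p.2 q.2) * x q = lam * x p) :
    ∃ y : Fin n → ℂ, (∀ i k, x (i, k) = y k) ∧ B *ᵥ y = lam • y := by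
  have hlam0 : lam ≠ 0 := by
    intro h; rw [h] at hlam; simp at hlam; linarith
  set b := hWH.eigenvectorBasis with hb
  set μ := hWH.eigenvalues with hμ
  have hbvec : ∀ p, Wc *ᵥ ⇑(b p) = ((μ p : ℝ) : ℂ) • ⇑(b p) := by
    intro p
    rw [hWH.mulVec_eigenvectorBasis p]
    ext i
    simp [Complex.real_smul]
    rfl
  have hbne : ∀ p, (⇑(b p) : Fin m → ℂ) ≠ 0 := by
    intro p h
    exact b.orthonormal.ne_zero p (by ext i; exact congrFun h i)
  set y : Fin m → Fin n → ℂ := fun p k => ∑ i, (starRingEnd ℂ) (b p i) * x (i, k) with hy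
  -- step A
  have hA : ∀ p, lam • y p = ((μ p : ℝ) : ℂ) • (B *ᵥ y p) := by
    intro p
    funext k
    have h1 : ∀ j, ∑ i, (starRingEnd ℂ) (b p i) * Wc i j
        = ((μ p : ℝ) : ℂ) * (starRingEnd ℂ) (b p j) := by
      intro j
      have e1 : ∑ i, (starRingEnd ℂ) (b p i) * Wc i j
          = (starRingEnd ℂ) ((Wc *ᵥ ⇑(b p)) j) := by
        rw [mulVec, dotProduct, map_sum]
        refine Finset.sum_congr rfl fun i _ => ?_
        have hst : (starRingEnd ℂ) (Wc j i) = Wc i j := hWH.apply i j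
        rw [_root_.map_mul, hst]
        exact mul_comm _ _
      rw [e1, hbvec p]
      simp [mul_comm]
    have e0 : lam • y p k = lam * y p k := rfl
    show lam * y p k = _
    calc lam * y p k = ∑ i, (starRingEnd ℂ) (b p i) * (lam * x (i, k)) := by
          rw [hy]; simp only []; rw [Finset.mul_sum]; exact Finset.sum_congr rfl fun i _ => by ring
      _ = ∑ i, (starRingEnd ℂ) (b p i) * (∑ q : Fin m × Fin n, (Wc i q.1 * B k q.2) * x q) := by
          refine Finset.sum_congr rfl fun i _ => ?_
          rw [hx (i, k)]
      _ = ∑ i, ∑ q : Fin m × Fin n, (starRingEnd ℂ) (b p i) * ((Wc i q.1 * B k q.2) * x q) := by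
          exact Finset.sum_congr rfl fun i _ => Finset.mul_sum _ _ _
      _ = ∑ q : Fin m × Fin n, ∑ i, (starRingEnd ℂ) (b p i) * ((Wc i q.1 * B k q.2) * x q) :=
          Finset.sum_comm
      _ = ∑ q : Fin m × Fin n, (∑ i, (starRingEnd ℂ) (b p i) * Wc i q.1) * (B k q.2 * x q) := by
          refine Finset.sum_congr rfl fun q _ => ?_
          rw [Finset.sum_mul]
          exact Finset.sum_congr rfl fun i _ => by ring
      _ = ((μ p : ℝ) : ℂ) * ∑ q : Fin m × Fin n, (starRingEnd ℂ) (b p q.1) * (B k q.2 * x q) := by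
          rw [Finset.mul_sum]
          refine Finset.sum_congr rfl fun q _ => ?_
          rw [h1 q.1]; ring
      _ = ((μ p : ℝ) : ℂ) * (B *ᵥ y p) k := by
          congr 1
          rw [mulVec, dotProduct, Fintype.sum_prod_type]
          rw [Finset.sum_comm]
          refine Finset.sum_congr rfl fun l _ => ?_
          rw [hy]; simp only []
          rw [Finset.mul_sum]
          exact Finset.sum_congr rfl fun j _ => by ring
  -- step B
  have hBzero : ∀ p, μ p ≠ 1 → y p = 0 := by
    intro p hne
    by_contra hyne
    rcases heigW (μ p) _ (hbne p) (hbvec p) with h1 | h2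
    · exact hne h1
    by_cases hμ0 : (μ p : ℝ) = 0
    · have h3 := hA p
      rw [hμ0] at h3
      simp only [Complex.ofReal_zero, zero_smul] at h3
      exact hyne (by simpa [smul_eq_zero, hlam0] using h3)
    · have hμ0' : ((μ p : ℝ) : ℂ) ≠ 0 := by exact_mod_cast hμ0
      have heq : B *ᵥ y p = (((μ p : ℝ) : ℂ)⁻¹ * lam) • y p := by
        calc B *ᵥ y p = ((μ p : ℝ) : ℂ)⁻¹ • (((μ p : ℝ) : ℂ) • (B *ᵥ y p)) := by
              rw [smul_smul, inv_mul_cancel₀ hμ0', one_smul]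
          _ = ((μ p : ℝ) : ℂ)⁻¹ • (lam • y p) := by rw [← hA p]
          _ = (((μ p : ℝ) : ℂ)⁻¹ * lam) • y p := by rw [smul_smul]
      have hle := hB _ _ hyne heq
      have habs : ‖((μ p : ℝ) : ℂ)⁻¹ * lam‖ = |μ p|⁻¹ * ‖lam‖ := by
        rw [norm_mul, norm_inv, Complex.norm_real, Real.norm_eq_abs]
      rw [habs] at hle
      have hμpos : 0 < |μ p| := abs_pos.mpr hμ0
      have h4 : ‖lam‖ ≤ |μ p| * ρA := by
        rw [inv_mul_le_iff₀ hμpos] at hle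
        exact hle
      have h5 : |μ p| * ρA < ρA⁻¹ * ρA := mul_lt_mul_of_pos_right h2 hρ_pos
      rw [inv_mul_cancel₀ (ne_of_gt hρ_pos)] at h5
      linarith
  -- step C: expansion
  have hexp : ∀ i k, x (i, k) = ∑ p, b p i * y p k := by
    intro i k
    set w : EuclideanSpace ℂ (Fin m) := WithLp.toLp 2 (fun j => x (j, k)) with hw
    have h0 : x (i, k) = w i := rfl
    rw [h0]
    conv_lhs => rw [← b.sum_repr w]
    rw [show ((∑ p, b.repr w p • b p : EuclideanSpace ℂ (Fin m)) i)
        = ∑ p, (b.repr w p • b p : EuclideanSpace ℂ (Fin m)) i from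
      by rw [WithLp.ofLp_sum]; exact Finset.sum_apply i Finset.univ _]
    refine Finset.sum_congr rfl fun p _ => ?_
    have h6 : b.repr w p = y p k := by
      rw [OrthonormalBasis.repr_apply_apply, PiLp.inner_apply]
      rw [hy]
      simp [RCLike.inner_apply, hw]
      exact Finset.sum_congr rfl fun _ _ => mul_comm _ _
    rw [h6]
    simp [smul_eq_mul]
    ring
  -- step D: constancy
  have hconst : ∀ i j k, x (i, k) = x (j, k) := by
    intro i j k
    rw [hexp i k, hexp j k]
    refine Finset.sum_congr rfl fun p _ => ?_
    by_cases hp : μ p = 1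
    · have h7 : Wc *ᵥ ⇑(b p) = ⇑(b p) := by rw [hbvec p, hp]; simp
      exact congrArg (fun z => z * y p k) (hker1 _ h7 i j)
    · rw [hBzero p hp]; simp
  -- step E
  refine ⟨fun k => x (⟨0, hm⟩, k), fun i k => hconst i ⟨0, hm⟩ k, ?_⟩
  funext k
  have h8 := hx (⟨0, hm⟩, k)
  rw [Fintype.sum_prod_type] at h8
  have h9 : ∑ j, ∑ l, (Wc ⟨0, hm⟩ j * B k l) * x (j, l)
      = (∑ j, Wc ⟨0, hm⟩ j) * ∑ l, B k l * x (⟨0, hm⟩, l) := by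
    rw [Finset.sum_mul]
    refine Finset.sum_congr rfl fun j _ => ?_
    rw [Finset.mul_sum]
    refine Finset.sum_congr rfl fun l _ => ?_
    rw [hconst j ⟨0, hm⟩ l]
    ring
  rw [h9, hrow] at h8
  rw [one_mul] at h8
  show (B *ᵥ fun k => x (⟨0, hm⟩, k)) k = _
  rw [mulVec, dotProduct]
  simp only [Pi.smul_apply, smul_eq_mul]
  exact h8

/-- With L the Laplacian of a connected graph on m > 2 vertices,
eigenvalues 0 = λ₁ < λ₂ ≤ ⋯ ≤ λₘ, (A, C) detectable, 0 < ρ(A) < (λₘ + λ₂)/(λₘ − λ₂),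
and W = I − αL with α > 0 and λ₂⁻¹(1 − ρ(A)⁻¹) < α < λₘ⁻¹(1 + ρ(A)⁻¹): for every
λ ∈ ℂ with |λ| ≥ 1 and every partition of {1,…,m} into a set T = {i₁,…,i_l} and its
complement {i_{l+1},…,i_m}, the block matrix with first block row
(W ⊗ A − λI, B̄_{i₁}, …, B̄_{i_l}) and remaining block rows (C̄_{i_j}, 0, …, 0),
j = l+1, …, m, has rank at least nm over ℂ. -/
theorem stmt11 (m n : ℕ) (hm : 2 < m)
    (G : SimpleGraph (Fin m)) [DecidableRel G.Adj]
    (L : Matrix (Fin m) (Fin m) ℝ) (hL : L = G.lapMatrix ℝ)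
    (hconn : G.Connected)
    (eig : Fin m → ℝ) (heig_mono : Monotone eig)
    (hchar : L.charpoly = ∏ i, (X - C (eig i)))
    (heig0 : eig ⟨0, by omega⟩ = 0) (heig1 : 0 < eig ⟨1, by omega⟩)
    (A : Matrix (Fin n) (Fin n) ℝ)
    (r : Fin m → ℕ) (Cm : ∀ i : Fin m, Matrix (Fin (r i)) (Fin n) ℝ)
    -- (A, C) is detectable
    (hdet : ∀ lam : ℂ, 1 ≤ ‖lam‖ → ∀ v : Fin n → ℂ, v ≠ 0 →
      (A.map Complex.ofReal).mulVec v = lam • v →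
        ∃ i, ((Cm i).map Complex.ofReal).mulVec v ≠ 0)
    -- ρA is the spectral radius of A
    (ρA : ℝ) (hρ_pos : 0 < ρA)
    (hρ_ub : ∀ μ : ℂ, (∃ v : Fin n → ℂ, v ≠ 0 ∧
        (A.map Complex.ofReal).mulVec v = μ • v) → ‖μ‖ ≤ ρA)
    (hρ_mem : ∃ μ : ℂ, (∃ v : Fin n → ℂ, v ≠ 0 ∧
        (A.map Complex.ofReal).mulVec v = μ • v) ∧ ‖μ‖ = ρA)
    (hspec : ρA < (eig ⟨m - 1, by omega⟩ + eig ⟨1, by omega⟩) /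
        (eig ⟨m - 1, by omega⟩ - eig ⟨1, by omega⟩))
    (α : ℝ) (hα_pos : 0 < α)
    (hα_lo : (eig ⟨1, by omega⟩)⁻¹ * (1 - ρA⁻¹) < α)
    (hα_hi : α < (eig ⟨m - 1, by omega⟩)⁻¹ * (1 + ρA⁻¹))
    (W : Matrix (Fin m) (Fin m) ℝ) (hW : W = 1 - α • L) :
    ∀ lam : ℂ, 1 ≤ ‖lam‖ →
      ∀ T : Finset (Fin m),
        n * m ≤
          (Matrix.fromBlocks
            ((W ⊗ₖ A).map Complex.ofReal -
              lam • (1 : Matrix (Fin m × Fin n) (Fin m × Fin n) ℂ))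
            (Matrix.of fun (p : Fin m × Fin n)
                (q : Σ j : {j : Fin m // j ∈ T},
                  ({k : Fin m // G.Adj j.1 k ∨ k = j.1} × Fin n)) =>
              ((Bbar n G q.1.1).map Complex.ofReal) p q.2)
            (Matrix.of fun (q : Σ j : {j : Fin m // j ∉ T}, Fin (r j.1))
                (p : Fin m × Fin n) =>
              if (q.1 : Fin m) = p.1
                then ((Cm q.1.1).map Complex.ofReal) q.2 p.2 else 0)
            0).rank := by
  intro lam hlam T
  have hm0 : 0 < m := by omega
  set i1 : Fin m := ⟨1, by omega⟩ with hi1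
  set imx : Fin m := ⟨m - 1, by omega⟩ with himx
  set Lc : Matrix (Fin m) (Fin m) ℂ := L.map Complex.ofReal with hLc
  set Wc : Matrix (Fin m) (Fin m) ℂ := W.map Complex.ofReal with hWcdef
  set Ac : Matrix (Fin n) (Fin n) ℂ := A.map Complex.ofReal with hAc
  -- symmetry of W
  have hLsymm : ∀ i j, L i j = L j i := by
    intro i j
    have h := G.isSymm_lapMatrix (R := ℝ)
    rw [hL]
    exact (congrFun (congrFun h j) i).symm ▸ (congrFun (congrFun h j) i)
  have hWsymm : ∀ i j, W i j = W j i := by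
    intro i j
    rw [hW]
    simp only [Matrix.sub_apply, Matrix.smul_apply, Matrix.one_apply, smul_eq_mul]
    rw [hLsymm i j]
    by_cases h : i = j <;> simp [h, eq_comm]
  have hWH : Wc.IsHermitian := by
    rw [Matrix.IsHermitian]
    ext i j
    simp only [conjTranspose_apply, hWcdef, Matrix.map_apply]
    rw [hWsymm j i]
    exact Complex.conj_ofReal _
  -- W = 1 - α L over ℂ
  have hWcLc : Wc = 1 - (α : ℂ) • Lc := by
    ext i j
    simp only [hWcdef, hLc, Matrix.map_apply, hW, Matrix.sub_apply, Matrix.smul_apply,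
      Matrix.one_apply, smul_eq_mul]
    push_cast
    split_ifs <;> simp
  have hα0 : (α : ℂ) ≠ 0 := by exact_mod_cast ne_of_gt hα_pos
  -- eigenvalue bounds for eig
  have heig_im_pos : 0 < eig imx := lt_of_lt_of_le heig1 (heig_mono (by
    simp only [hi1, himx, Fin.mk_le_mk]; omega))
  have hb1 : 1 - ρA⁻¹ < α * eig i1 := by
    have := mul_lt_mul_of_pos_right hα_lo heig1
    rw [inv_mul_eq_div, div_mul_cancel₀] at this
    · linarith [this]
    · exact ne_of_gt heig1
  have hb2 : α * eig imx < 1 + ρA⁻¹ := by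
    have := mul_lt_mul_of_pos_right hα_hi heig_im_pos
    rw [inv_mul_eq_div, div_mul_cancel₀] at this
    · linarith [this]
    · exact ne_of_gt heig_im_pos
  -- classification of eigenvalues of Wc
  have heigW : ∀ (μ : ℝ) (v : Fin m → ℂ), v ≠ 0 → Wc *ᵥ v = (μ : ℂ) • v →
      μ = 1 ∨ |μ| < ρA⁻¹ := by
    intro μ v hv hvec
    set c : ℝ := (1 - μ) / α with hc
    have hLv : Lc *ᵥ v = ((c : ℝ) : ℂ) • v := by
      rw [hWcLc] at hvec
      rw [sub_mulVec, one_mulVec, smul_mulVec] at hvec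
      have h2 : (α : ℂ) • (Lc *ᵥ v) = ((1 : ℂ) - (μ : ℂ)) • v := by
        rw [sub_smul, one_smul, ← hvec]; abel
      have h3 := congrArg (fun z => (α : ℂ)⁻¹ • z) h2
      simp only [smul_smul, inv_mul_cancel₀ hα0, one_smul] at h3
      rw [h3]
      congr 1
      rw [hc]
      push_cast
      field_simp
    have hdet0 : (Lc - (c : ℂ) • 1).det = 0 := by
      rw [← Matrix.exists_mulVec_eq_zero_iff]
      refine ⟨v, hv, ?_⟩
      rw [sub_mulVec, smul_mulVec, one_mulVec, hLv, sub_self]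
    have hchar0 : Lc.charpoly.eval ((c : ℝ) : ℂ) = 0 := by
      rw [eval_charpoly_aux]
      have : ((c : ℂ) • 1 - Lc) = -(Lc - (c : ℂ) • 1) := by rw [neg_sub]
      rw [this, Matrix.det_neg, hdet0, mul_zero]
    have hLcchar : Lc.charpoly = ∏ i, (X - C ((eig i : ℝ) : ℂ)) := by
      have h1 : Lc = L.map (Complex.ofRealHom : ℝ →+* ℂ) := rfl
      rw [h1, Matrix.charpoly_map, hchar, Polynomial.map_prod]
      refine Finset.prod_congr rfl fun i _ => ?_
      rw [Polynomial.map_sub, Polynomial.map_X, Polynomial.map_C]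
      rfl
    rw [hLcchar, Polynomial.eval_prod] at hchar0
    rw [Finset.prod_eq_zero_iff] at hchar0
    obtain ⟨i, -, hi⟩ := hchar0
    rw [Polynomial.eval_sub, Polynomial.eval_X, Polynomial.eval_C, sub_eq_zero] at hi
    have hceig : c = eig i := by exact_mod_cast hi
    have hμeq : μ = 1 - α * eig i := by
      rw [← hceig, hc]
      field_simp
      ring
    by_cases h0 : (i : ℕ) = 0
    · left
      have : i = ⟨0, by omega⟩ := Fin.ext h0
      rw [hμeq, this, heig0]
      ring
    · right
      have hilt := i.isLt
      have hge : eig i1 ≤ eig i := heig_mono (by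
        simp only [hi1, Fin.le_def]; omega)
      have hle : eig i ≤ eig imx := heig_mono (by
        simp only [himx, Fin.le_def]; omega)
      rw [hμeq, abs_lt]
      constructor
      · nlinarith [mul_le_mul_of_nonneg_left hle (le_of_lt hα_pos)]
      · nlinarith [mul_le_mul_of_nonneg_left hge (le_of_lt hα_pos)]
  -- kernel of Wc - 1 is constants
  have hker1 : ∀ v : Fin m → ℂ, Wc *ᵥ v = v → ∀ i j, v i = v j := by
    intro v hv i j
    have hLv : Lc *ᵥ v = 0 := by
      rw [hWcLc, sub_mulVec, one_mulVec, smul_mulVec] at hv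
      have h2 : (α : ℂ) • (Lc *ᵥ v) = 0 := by
        rw [sub_eq_self] at hv
        exact hv
      rcases smul_eq_zero.mp h2 with h | h
      · exact absurd h hα0
      · exact h
    have hre : L *ᵥ (fun i => (v i).re) = 0 := by
      funext a
      have := congrFun hLv a
      simp only [mulVec, dotProduct, Pi.zero_apply] at this ⊢
      have hre := congrArg Complex.re this
      rw [Complex.re_sum] at hre
      simp only [hLc, Matrix.map_apply, Complex.mul_re, Complex.ofReal_re,
        Complex.ofReal_im, zero_mul, sub_zero, Complex.zero_re] at hre
      exact hre
    have him : L *ᵥ (fun i => (v i).im) = 0 := by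
      funext a
      have := congrFun hLv a
      simp only [mulVec, dotProduct, Pi.zero_apply] at this ⊢
      have him := congrArg Complex.im this
      rw [Complex.im_sum] at him
      simp only [hLc, Matrix.map_apply, Complex.mul_im, Complex.ofReal_re,
        Complex.ofReal_im, zero_mul, add_zero, Complex.zero_im] at him
      exact him
    have hreach : G.Reachable i j := hconn.preconnected i j
    have h1 : (v i).re = (v j).re := by
      have := (G.lapMatrix_mulVec_eq_zero_iff_forall_reachable
        (x := fun i => (v i).re)).mp (by rw [← hL]; exact hre) i j hreach
      exact this
    have h2 : (v i).im = (v j).im := by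
      have := (G.lapMatrix_mulVec_eq_zero_iff_forall_reachable
        (x := fun i => (v i).im)).mp (by rw [← hL]; exact him) i j hreach
      exact this
    exact Complex.ext h1 h2
  -- row sums of Wc are 1
  have hrowL : ∀ i, ∑ j, L i j = 0 := by
    intro i
    have := congrFun (G.lapMatrix_mulVec_const_eq_zero (R := ℝ)) i
    simp only [mulVec, dotProduct, mul_one, Pi.zero_apply] at this
    rw [hL]
    exact this
  have hrow : ∀ i, ∑ j, Wc i j = 1 := by
    intro i
    have : ∑ j, Wc i j = ((∑ j, W i j : ℝ) : ℂ) := by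
      push_cast
      rfl
    rw [this]
    have : ∑ j, W i j = 1 := by
      rw [hW]
      simp only [Matrix.sub_apply, Matrix.smul_apply, smul_eq_mul, Finset.sum_sub_distrib]
      rw [← Finset.mul_sum, hrowL]
      simp [Matrix.one_apply, Finset.sum_ite_eq]
    rw [this, Complex.ofReal_one]
  -- eigenvalue bounds for A and its transpose
  have hBA : ∀ (μ : ℂ) (v : Fin n → ℂ), v ≠ 0 → Ac *ᵥ v = μ • v → ‖μ‖ ≤ ρA :=
    fun μ v hv hvec => hρ_ub μ ⟨v, hv, hvec⟩
  have hBT : ∀ (μ : ℂ) (v : Fin n → ℂ), v ≠ 0 → Acᵀ *ᵥ v = μ • v → ‖μ‖ ≤ ρA := by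
    intro μ v hv hvec
    have hdet0 : (Acᵀ - μ • 1).det = 0 := by
      rw [← Matrix.exists_mulVec_eq_zero_iff]
      exact ⟨v, hv, by rw [sub_mulVec, smul_mulVec, one_mulVec, hvec, sub_self]⟩
    have hdet1 : (Ac - μ • 1).det = 0 := by
      have ht : (Ac - μ • 1)ᵀ = Acᵀ - μ • 1 := by
        rw [transpose_sub, transpose_smul, transpose_one]
      rw [← Matrix.det_transpose, ht]
      exact hdet0
    obtain ⟨w, hw, hw2⟩ := (Matrix.exists_mulVec_eq_zero_iff).mpr hdet1
    refine hρ_ub μ ⟨w, hw, ?_⟩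
    rw [sub_mulVec, smul_mulVec, one_mulVec, sub_eq_zero] at hw2
    exact hw2
  have hWcs : ∀ i j, Wc i j = Wc j i := by
    intro i j
    simp only [hWcdef, Matrix.map_apply]
    rw [hWsymm i j]
  have hKron : ∀ p q : Fin m × Fin n,
      ((W ⊗ₖ A).map Complex.ofReal) p q = Wc p.1 q.1 * Ac p.2 q.2 := by
    intro p q
    simp only [Matrix.map_apply, Matrix.kroneckerMap_apply, hWcdef, hAc]
    push_cast
    ring
  set M := (Matrix.fromBlocks
            ((W ⊗ₖ A).map Complex.ofReal -
              lam • (1 : Matrix (Fin m × Fin n) (Fin m × Fin n) ℂ))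
            (Matrix.of fun (p : Fin m × Fin n)
                (q : Σ j : {j : Fin m // j ∈ T},
                  ({k : Fin m // G.Adj j.1 k ∨ k = j.1} × Fin n)) =>
              ((Bbar n G q.1.1).map Complex.ofReal) p q.2)
            (Matrix.of fun (q : Σ j : {j : Fin m // j ∉ T}, Fin (r j.1))
                (p : Fin m × Fin n) =>
              if (q.1 : Fin m) = p.1
                then ((Cm q.1.1).map Complex.ofReal) q.2 p.2 else 0)
            0) with hM
  rcases T.eq_empty_or_nonempty with hT | ⟨i0, hi0⟩
  · -- T empty: column argument
    set N := M.submatrix id (Sum.inl : (Fin m × Fin n) →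
      (Fin m × Fin n) ⊕ (Σ j : {j : Fin m // j ∈ T},
        ({k : Fin m // G.Adj j.1 k ∨ k = j.1} × Fin n))) with hN
    have hrankle : N.rank ≤ M.rank := by
      rw [hN]
      exact rank_col_submatrix_le M _
    have hker : ∀ x : Fin m × Fin n → ℂ, N *ᵥ x = 0 → x = 0 := by
      intro x hx0
      by_contra hxne
      have hxeq : ∀ p : Fin m × Fin n,
          ∑ q : Fin m × Fin n, (Wc p.1 q.1 * Ac p.2 q.2) * x q = lam * x p := by
        intro p
        have h0 := congrFun hx0 (Sum.inl p)
        simp only [hN, mulVec, dotProduct, submatrix_apply, id_eq, hM, fromBlocks_apply₁₁,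
          Matrix.sub_apply, Matrix.smul_apply, smul_eq_mul, sub_mul, Finset.sum_sub_distrib,
          Pi.zero_apply] at h0
        have h1 : ∑ q : Fin m × Fin n,
            lam * (1 : Matrix (Fin m × Fin n) (Fin m × Fin n) ℂ) p q * x q = lam * x p := by
          simp [Matrix.one_apply, mul_ite, ite_mul, Finset.sum_ite_eq]
        rw [h1, sub_eq_zero] at h0
        rw [← h0]
        exact Finset.sum_congr rfl fun q _ => by rw [hKron p q]
      obtain ⟨y, hy1, hy2⟩ := key hm0 ρA hρ_pos Wc hWH heigW hker1 hrow Ac hBA lam hlam x hxeq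
      have hyne : y ≠ 0 := by
        intro h
        apply hxne
        funext p
        have : x (p.1, p.2) = y p.2 := hy1 p.1 p.2
        rw [show x p = x (p.1, p.2) from rfl, this, h]
        rfl
      obtain ⟨i, hCi⟩ := hdet lam hlam y hyne hy2
      apply hCi
      funext q
      have h0 := congrFun hx0 (Sum.inr ⟨⟨i, by simp [hT]⟩, q⟩)
      simp only [hN, mulVec, dotProduct, submatrix_apply, id_eq, hM, fromBlocks_apply₂₁,
        Matrix.of_apply, Pi.zero_apply] at h0
      rw [Fintype.sum_prod_type] at h0
      rw [Finset.sum_eq_single i (fun a _ ha => by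
        simp [Ne.symm ha]) (fun ha => absurd (Finset.mem_univ i) ha)] at h0
      simp only [if_pos rfl] at h0
      have : ((Cm i).map Complex.ofReal *ᵥ y) q
          = ∑ l, ((Cm i).map Complex.ofReal) q l * x (i, l) := by
        rw [mulVec, dotProduct]
        exact Finset.sum_congr rfl fun l _ => by rw [hy1 i l]
      rw [Pi.zero_apply, this]
      exact h0
    have hkerbot : LinearMap.ker (N.mulVecLin) = ⊥ := by
      rw [LinearMap.ker_eq_bot']
      intro x hx0
      exact hker x hx0
    have hrn := LinearMap.finrank_range_add_finrank_ker (N.mulVecLin)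
    rw [hkerbot, finrank_bot, add_zero] at hrn
    have hNrank : N.rank = n * m := by
      rw [Matrix.rank, hrn, Module.finrank_pi, Fintype.card_prod, Fintype.card_fin,
        Fintype.card_fin]
      ring
    omega
  · -- T nonempty: left kernel argument
    have hrt : Mᵀ.rank = M.rank := Matrix.rank_transpose M
    have hrn := LinearMap.finrank_range_add_finrank_ker (Mᵀ.mulVecLin)
    have hcard : Module.finrank ℂ
        (((Fin m × Fin n) ⊕ (Σ j : {j : Fin m // j ∉ T}, Fin (r j.1))) → ℂ)
        = n * m + Fintype.card (Σ j : {j : Fin m // j ∉ T}, Fin (r j.1)) := by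
      rw [Module.finrank_pi, Fintype.card_sum, Fintype.card_prod, Fintype.card_fin,
        Fintype.card_fin]
      ring
    have hkerle : Module.finrank ℂ (LinearMap.ker Mᵀ.mulVecLin)
        ≤ Fintype.card (Σ j : {j : Fin m // j ∉ T}, Fin (r j.1)) := by
      have hinj : Function.Injective
          ((LinearMap.funLeft ℂ ℂ (Sum.inr : (Σ j : {j : Fin m // j ∉ T}, Fin (r j.1)) →
            (Fin m × Fin n) ⊕ (Σ j : {j : Fin m // j ∉ T}, Fin (r j.1)))).comp
            (LinearMap.ker Mᵀ.mulVecLin).subtype) := by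
        rw [← LinearMap.ker_eq_bot, LinearMap.ker_eq_bot']
        rintro ⟨u, hu⟩ h0
        have hu0 : Mᵀ *ᵥ u = 0 := hu
        have hu2 : ∀ q, u (Sum.inr q) = 0 := fun q => congrFun h0 q
        set d : Fin m × Fin n → ℂ := fun p => u (Sum.inl p) with hd
        have hxeq : ∀ p : Fin m × Fin n,
            ∑ q : Fin m × Fin n, (Wc p.1 q.1 * Acᵀ p.2 q.2) * d q = lam * d p := by
          intro p
          have h1 := congrFun hu0 (Sum.inl p)
          simp only [mulVec, dotProduct, transpose_apply, Pi.zero_apply,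
            Fintype.sum_sum_type, hM, fromBlocks_apply₁₁, fromBlocks_apply₂₁,
            Matrix.of_apply, Matrix.sub_apply, Matrix.smul_apply, smul_eq_mul] at h1
          simp only [hu2, mul_zero, Finset.sum_const_zero, add_zero] at h1
          simp only [sub_mul, Finset.sum_sub_distrib] at h1
          have h2 : ∑ p' : Fin m × Fin n,
              lam * (1 : Matrix (Fin m × Fin n) (Fin m × Fin n) ℂ) p' p * u (Sum.inl p')
              = lam * u (Sum.inl p) := by
            simp [Matrix.one_apply, mul_ite, ite_mul, Finset.sum_ite_eq']
          rw [h2, sub_eq_zero] at h1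
          rw [← h1]
          refine Finset.sum_congr rfl fun q _ => ?_
          rw [hKron q p, hWcs p.1 q.1, transpose_apply]
          try ring
        have hzero : ∀ l : Fin n, d (i0, l) = 0 := by
          intro l
          have h1 := congrFun hu0 (Sum.inr ⟨⟨i0, hi0⟩, (⟨i0, Or.inr rfl⟩, l)⟩)
          simp only [mulVec, dotProduct, transpose_apply, Pi.zero_apply,
            Fintype.sum_sum_type, hM, fromBlocks_apply₁₂, fromBlocks_apply₂₂,
            Matrix.of_apply, Matrix.zero_apply, zero_mul, Finset.sum_const_zero,
            add_zero] at h1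
          have hB2 : ∀ (a : Fin m) (b : Fin n),
              ((Bbar n G i0).map Complex.ofReal) (a, b) (⟨i0, Or.inr rfl⟩, l)
              = if a = i0 ∧ b = l then 1 else 0 := by
            intro a b
            by_cases ha : a = i0 <;> by_cases hb : b = l <;>
              simp [Bbar, Ebar, Matrix.one_apply, ha, hb]
          rw [Finset.sum_eq_single ((i0, l) : Fin m × Fin n)
            (fun p _ hp => by
              obtain ⟨a, b⟩ := p
              rw [hB2 a b]
              have hnot : ¬(a = i0 ∧ b = l) := by
                rintro ⟨h1', h2'⟩
                exact hp (by rw [h1', h2'])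
              simp [hnot])
            (fun h => absurd (Finset.mem_univ _) h)] at h1
          rw [hB2 i0 l] at h1
          simpa using h1
        obtain ⟨y, hy1, hy2⟩ :=
          key hm0 ρA hρ_pos Wc hWH heigW hker1 hrow Acᵀ hBT lam hlam d hxeq
        apply Subtype.ext
        funext rr
        cases rr with
        | inl p =>
          have he : d (p.1, p.2) = y p.2 := hy1 p.1 p.2
          have hy0 : y p.2 = 0 := by rw [← hy1 i0 p.2]; exact hzero p.2
          show u (Sum.inl p) = 0
          rw [show u (Sum.inl p) = d (p.1, p.2) from rfl, he, hy0]
        | inr q => exact hu2 q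
      have hle := LinearMap.finrank_le_finrank_of_injective hinj
      rwa [Module.finrank_pi] at hle
    have hrdef : Mᵀ.rank = Module.finrank ℂ (LinearMap.range Mᵀ.mulVecLin) := rfl
    rw [hcard] at hrn
    omega
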